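/- Let M̄ be a smooth projective surface and D a reduced normal crossing divisor on M̄. If there exists α₀ ∈ (0,1) such that the ℝ-divisor L_α = K_{M̄} + αD is big and nef for all α ∈ (α₀, 1), then the pair (M̄, D) is D-minimal and of log-general type, and D is a semi-stable curve. -/

import Mathlib

open scoped BigOperators

/-- Abstract interface for a smooth complex projective surface `M̄`:
`C` is the group of ℝ-divisor classes, `inter` the intersection form,
`K` the canonical class, and `Curve` the collection of irreducible curves on `M̄`. -/
structure ProjSurface where
  /-- the group of ℝ-divisor classes on `M̄` -/
  C : Type
  [instAddC : AddCommGroup C]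
  [instModC : Module ℝ C]
  /-- the intersection form on ℝ-divisor classes -/
  inter : C → C → ℝ
  inter_symm : ∀ a b, inter a b = inter b a
  inter_add_left : ∀ a b c, inter (a + b) c = inter a c + inter b c
  inter_smul_left : ∀ (r : ℝ) (a b : C), inter (r • a) b = r * inter a b
  /-- the canonical class `K_{M̄}` -/
  K : C
  /-- the irreducible curves on `M̄` -/
  Curve : Type
  /-- the ℝ-divisor class of an irreducible curve -/
  cls : Curve → C
  /-- `E` is a smooth rational curve, i.e. `E ≅ ℂP¹` -/
  IsSmoothRational : Curve → Prop
  /-- `E` is a smooth curve -/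
  IsSmooth : Curve → Prop
  /-- the arithmetic genus of an irreducible curve -/
  pa : Curve → ℤ
  /-- adjunction: `(K + E)·E = 2 pₐ(E) − 2` -/
  adjunction : ∀ E, inter (K + cls E) (cls E) = 2 * (pa E : ℝ) - 2
  /-- a smooth rational curve has arithmetic genus `0` -/
  pa_rational : ∀ E, IsSmoothRational E → pa E = 0
  /-- a (finite) collection of irreducible curves forms a normal crossing configuration -/
  NormalCrossings : Set Curve → Prop
  /-- the complete linear system of (an integral divisor in) the class `a`
  is base-point free -/
  Bpf : C → Prop

attribute [instance] ProjSurface.instAddC ProjSurface.instModC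

namespace ProjSurface

variable (S : ProjSurface)

/-- An ℝ-divisor class is nef if it meets every irreducible curve nonnegatively. -/
def Nef (a : S.C) : Prop := ∀ E : S.Curve, 0 ≤ S.inter a (S.cls E)

/-- Ampleness for ℝ-divisor classes on a projective surface, via the
Nakai–Moishezon/Campana–Peternell criterion: positive self-intersection and
positive intersection with every irreducible curve. -/
def Ample (a : S.C) : Prop :=
  0 < S.inter a a ∧ ∀ E : S.Curve, 0 < S.inter a (S.cls E)

/-- Effective ℝ-divisor classes: nonnegative real combinations of irreducible curves. -/
def Effective (a : S.C) : Prop :=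
  ∃ (n : ℕ) (r : Fin n → ℝ) (E : Fin n → S.Curve),
    (∀ i, 0 ≤ r i) ∧ a = ∑ i, r i • S.cls (E i)

/-- Big ℝ-divisor classes: sum of an ample and an effective class. -/
def Big (a : S.C) : Prop := ∃ b e, S.Ample b ∧ S.Effective e ∧ a = b + e

/-- a `(−2)`-curve: a smooth rational curve with self-intersection `−2` -/
def IsMinusTwo (E : S.Curve) : Prop :=
  S.IsSmoothRational E ∧ S.inter (S.cls E) (S.cls E) = -2

end ProjSurface

/-- A logarithmic pair `(M̄, D)`: a reduced divisor `D` with normal crossings on `M̄`,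
given by its finitely many pairwise distinct irreducible components. -/
structure LogPair (S : ProjSurface) where
  /-- index set of the irreducible components of `D` -/
  ι : Type
  [instFin : Fintype ι]
  /-- the irreducible components `D_i` of `D` -/
  comp : ι → S.Curve
  comp_inj : Function.Injective comp
  normal_crossings : S.NormalCrossings (Set.range comp)

attribute [instance] LogPair.instFin

namespace LogPair

variable {S : ProjSurface} (P : LogPair S)

/-- the class of the divisor `D = Σ Dᵢ` -/
def D : S.C := ∑ i, S.cls (P.comp i)

/-- the log-canonical class `L = K_{M̄} + D` -/
def L : S.C := S.K + P.D

/-- the twisted log-canonical class `L_α = K_{M̄} + αD` -/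
def Lα (α : ℝ) : S.C := S.K + α • P.D

/-- `E` is an irreducible component of `D` -/
def IsComponent (E : S.Curve) : Prop := ∃ i, P.comp i = E

/-- `(M̄, D)` is `D`-minimal: there is no curve `E ≅ ℂP¹` on `M̄` with
`E² = −1` and `E·D ≤ 1`. -/
def DMinimal : Prop :=
  ¬ ∃ E : S.Curve, S.IsSmoothRational E ∧ S.inter (S.cls E) (S.cls E) = -1 ∧
      S.inter (S.cls E) P.D ≤ 1

/-- `D` is semi-stable: every smooth rational component of `D` meets the other
components of `D` in at least two points (i.e. `E·(D−E) ≥ 2`). -/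
def SemiStable : Prop :=
  ∀ i, S.IsSmoothRational (P.comp i) →
    2 ≤ S.inter (S.cls (P.comp i)) (P.D - S.cls (P.comp i))

/-- `(M̄, D)` is of log-general type: `L = K + D` is big. -/
def LogGeneralType : Prop := S.Big P.L

end LogPair


section Aux

variable {S : ProjSurface}

lemma effective_sum_fintype {ι : Type} [Fintype ι] (r : ι → ℝ) (E : ι → S.Curve)
    (hr : ∀ i, 0 ≤ r i) : S.Effective (∑ i, r i • S.cls (E i)) := by
  classical
  let e := Fintype.equivFin ι
  refine ⟨Fintype.card ι, r ∘ e.symm, E ∘ e.symm, fun i => hr _, ?_⟩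
  exact (Equiv.sum_comp e.symm (fun i => r i • S.cls (E i))).symm

lemma effective_add {a b : S.C} (ha : S.Effective a) (hb : S.Effective b) :
    S.Effective (a + b) := by
  obtain ⟨n, r, E, hr, rfl⟩ := ha
  obtain ⟨m, s, F, hs, rfl⟩ := hb
  refine ⟨n + m, Fin.append r s, Fin.append E F, ?_, ?_⟩
  · intro i
    refine Fin.addCases (fun j => ?_) (fun j => ?_) i
    · simpa [Fin.append_left] using hr j
    · simpa [Fin.append_right] using hs j
  · rw [Fin.sum_univ_add]
    simp [Fin.append_left, Fin.append_right]

lemma inter_K_rational (E : S.Curve) (h : S.IsSmoothRational E) :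
    S.inter S.K (S.cls E) = -2 - S.inter (S.cls E) (S.cls E) := by
  have := S.adjunction E
  rw [S.inter_add_left, S.pa_rational E h] at this
  push_cast at this
  linarith

lemma inter_Lα (P : LogPair S) (α : ℝ) (c : S.C) :
    S.inter (P.Lα α) c = S.inter S.K c + α * S.inter P.D c := by
  rw [LogPair.Lα, S.inter_add_left, S.inter_smul_left]

end Aux

/-- If there exists `α₀ ∈ (0,1)` such that the ℝ-divisor
`L_α = K + αD` is big and nef for all `α ∈ (α₀, 1)`, then `(M̄, D)` is
`D`-minimal of log-general type and `D` is a semi-stable curve. -/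


theorem bigNef_near_one_implies_minimal_logGeneral_semiStable
    (S : ProjSurface) (P : LogPair S)
    (h : ∃ α₀ ∈ Set.Ioo (0 : ℝ) 1, ∀ α ∈ Set.Ioo α₀ 1,
      S.Big (P.Lα α) ∧ S.Nef (P.Lα α)) :
    P.DMinimal ∧ P.LogGeneralType ∧ P.SemiStable := by
  obtain ⟨α₀, ⟨hα₀0, hα₀1⟩, hα⟩ := h
  -- a convenient middle value
  set β : ℝ := (α₀ + 1) / 2 with hβ
  have hβmem : β ∈ Set.Ioo α₀ 1 := ⟨by linarith, by linarith⟩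
  have hβ0 : 0 < β := by linarith
  have hβ1 : β < 1 := hβmem.2
  obtain ⟨hβbig, hβnef⟩ := hα β hβmem
  refine ⟨?_, ?_, ?_⟩
  · -- D-minimality
    rintro ⟨E, hsr, hE2, hED⟩
    have hnef := hβnef E
    rw [inter_Lα] at hnef
    rw [inter_K_rational E hsr, hE2] at hnef
    rw [S.inter_symm P.D (S.cls E)] at hnef
    nlinarith [hED, hβ0, hβ1]
  · -- log-general type
    obtain ⟨b, e, hb, he, heq⟩ := hβbig
    refine ⟨b, e + (1 - β) • P.D, hb, ?_, ?_⟩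
    · refine effective_add he ?_
      have : (1 - β) • P.D = ∑ i, (1 - β) • S.cls (P.comp i) := by
        rw [LogPair.D, Finset.smul_sum]
      rw [this]
      exact effective_sum_fintype _ _ (fun i => by linarith)
    · have : P.L = P.Lα β + (1 - β) • P.D := by
        rw [LogPair.L, LogPair.Lα, add_assoc, ← add_smul]
        norm_num
      rw [this, heq, add_assoc]
  · -- semi-stability
    intro i hsr
    by_contra hc
    push_neg at hc
    obtain ⟨E, hE⟩ : ∃ E, E = P.comp i := ⟨_, rfl⟩
    rw [← hE] at hc hsr
    obtain ⟨e, he⟩ : ∃ x, x = S.inter (S.cls E) (S.cls E) := ⟨_, rfl⟩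
    obtain ⟨c, hcdef⟩ : ∃ x, x = S.inter (S.cls E) (P.D - S.cls E) := ⟨_, rfl⟩
    rw [← hcdef] at hc
    have hDE : S.inter P.D (S.cls E) = c + e := by
      rw [hcdef, he, S.inter_symm (S.cls E) (P.D - S.cls E), sub_eq_add_neg,
        ← neg_one_smul ℝ (S.cls E), S.inter_add_left, S.inter_smul_left]
      ring
    have hc2 : c < 2 := hc
    have hB0 : (0 : ℝ) < |c + e| + 1 := by positivity
    set B : ℝ := |c + e| + 1 with hB
    set ε : ℝ := min ((1 - α₀) / 2) ((2 - c) / (2 * B)) with hε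
    have hε0 : 0 < ε := lt_min (by linarith) (div_pos (by linarith) (by linarith))
    have hεle : ε ≤ (2 - c) / (2 * B) := min_le_right _ _
    have hεB : ε * B ≤ (2 - c) / 2 := by
      have h1 := mul_le_mul_of_nonneg_right hεle (le_of_lt hB0)
      have h2 : (2 - c) / (2 * B) * B = (2 - c) / 2 := by
        field_simp
      linarith
    have hα' : (1 - ε) ∈ Set.Ioo α₀ 1 := by
      constructor
      · have : ε ≤ (1 - α₀) / 2 := min_le_left _ _
        linarith
      · linarith
    have hnef := (hα (1 - ε) hα').2 E
    rw [inter_Lα, inter_K_rational E hsr, hDE, ← he] at hnef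
    -- hnef : 0 ≤ -2 - e + (1 - ε) * (c + e)
    have hce : -B ≤ c + e := by
      have := neg_abs_le (c + e)
      rw [hB]; linarith
    nlinarith [mul_le_mul_of_nonneg_left hce (le_of_lt hε0)]
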